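/- Let C be a strict monoidal category and T a strong twine on C. Then T is a twine, i.e. T satisfies (T_{X⊗Y,Z}⊗id_T)(id_X⊗T_{Y,Z}⁻¹⊗id_T)(id_X⊗T_{Y,Z⊗T}) = (id_X⊗T_{Y,Z⊗T})(id_X⊗T_{Y,Z}⁻¹⊗id_T)(T_{X⊗Y,Z}⊗id_T); hence every strongly entwined category is entwined. -/

import Mathlib

open CategoryTheory MonoidalCategory

universe v u

/-- A monoidal category is strict when the associators and unitors are `eqToHom`s of
equalities of objects. -/
structure MonStrict (C : Type u) [Category.{v} C] [MonoidalCategory C] : Prop where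
  assocObj : ∀ X Y Z : C, (X ⊗ Y) ⊗ Z = X ⊗ (Y ⊗ Z)
  lidObj : ∀ X : C, 𝟙_ C ⊗ X = X
  ridObj : ∀ X : C, X ⊗ 𝟙_ C = X
  assocHom : ∀ X Y Z : C, (α_ X Y Z).hom = eqToHom (assocObj X Y Z)
  lidHom : ∀ X : C, (λ_ X).hom = eqToHom (lidObj X)
  ridHom : ∀ X : C, (ρ_ X).hom = eqToHom (ridObj X)

variable {C : Type u} [Category.{v} C] [MonoidalCategory C]

/-- Transport of an endomorphism along an equality of objects of a strict monoidal
category. -/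
def cE {X Y : C} (h : X = Y) (f : Y ⟶ Y) : X ⟶ X := eqToHom h ≫ f ≫ eqToHom h.symm

/-- A pure-braided structure on a strict monoidal category: two families of natural
isomorphisms `A, B : U ⊗ V ⊗ W ≅ U ⊗ V ⊗ W` satisfying the pure-braided axioms. -/
structure PureBraided (C : Type u) [Category.{v} C] [MonoidalCategory C]
    (hS : MonStrict C) where
  A : ∀ U V W : C, U ⊗ (V ⊗ W) ≅ U ⊗ (V ⊗ W)
  B : ∀ U V W : C, U ⊗ (V ⊗ W) ≅ U ⊗ (V ⊗ W)
  natA : ∀ {U V W U' V' W' : C} (f : U ⟶ U') (g : V ⟶ V') (h : W ⟶ W'),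
    (f ⊗ₘ (g ⊗ₘ h)) ≫ (A U' V' W').hom = (A U V W).hom ≫ (f ⊗ₘ (g ⊗ₘ h))
  natB : ∀ {U V W U' V' W' : C} (f : U ⟶ U') (g : V ⟶ V') (h : W ⟶ W'),
    (f ⊗ₘ (g ⊗ₘ h)) ≫ (B U' V' W').hom = (B U V W).hom ≫ (f ⊗ₘ (g ⊗ₘ h))
  /-- `A_{U⊗V,W,X} = A_{U,V⊗W,X}(id_U ⊗ A_{V,W,X})` -/
  a1 : ∀ U V W X : C, (A (U ⊗ V) W X).hom =
    cE (by simp [hS.assocObj]) ((𝟙 U ⊗ₘ (A V W X).hom) ≫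
      cE (by simp [hS.assocObj]) (A U (V ⊗ W) X).hom)
  /-- `A_{U,V,W⊗X} = (A_{U,V,W} ⊗ id_X) A_{U,V⊗W,X}` -/
  a2 : ∀ U V W X : C, (A U V (W ⊗ X)).hom =
    cE (by simp [hS.assocObj]) ((cE (by simp [hS.assocObj]) (A U (V ⊗ W) X).hom) ≫
      ((A U V W).hom ⊗ₘ 𝟙 X))
  /-- `B_{U⊗V,W,X} = (id_U ⊗ B_{V,W,X}) B_{U,V⊗W,X}` -/
  baba : ∀ U V W X : C, (B (U ⊗ V) W X).hom =
    cE (by simp [hS.assocObj]) ((cE (by simp [hS.assocObj]) (B U (V ⊗ W) X).hom) ≫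
      (𝟙 U ⊗ₘ (B V W X).hom))
  /-- `B_{U,V,W⊗X} = B_{U,V⊗W,X}(B_{U,V,W} ⊗ id_X)` -/
  b2 : ∀ U V W X : C, (B U V (W ⊗ X)).hom =
    cE (by simp [hS.assocObj]) (((B U V W).hom ⊗ₘ 𝟙 X) ≫
      cE (by simp [hS.assocObj]) (B U (V ⊗ W) X).hom)
  /-- `(A_{U,V,W} ⊗ id_X)(id_U ⊗ B_{V,W,X}) = (id_U ⊗ B_{V,W,X})(A_{U,V,W} ⊗ id_X)` -/
  cab : ∀ U V W X : C,
    cE (by simp [hS.assocObj]) (𝟙 U ⊗ₘ (B V W X).hom) ≫ ((A U V W).hom ⊗ₘ 𝟙 X)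
    = ((A U V W).hom ⊗ₘ 𝟙 X) ≫ cE (by simp [hS.assocObj]) (𝟙 U ⊗ₘ (B V W X).hom)
  /-- `A_{U,I,V} = B_{U,I,V}` -/
  t1t : ∀ U V : C, A U (𝟙_ C) V = B U (𝟙_ C) V

/-- A twine on a strict monoidal category. -/
structure Twine (C : Type u) [Category.{v} C] [MonoidalCategory C]
    (hS : MonStrict C) where
  D : ∀ X Y : C, X ⊗ Y ≅ X ⊗ Y
  nat : ∀ {X Y X' Y' : C} (f : X ⟶ X') (g : Y ⟶ Y'),
    (f ⊗ₘ g) ≫ (D X' Y').hom = (D X Y).hom ≫ (f ⊗ₘ g)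
  unit : (D (𝟙_ C) (𝟙_ C)).hom = 𝟙 (𝟙_ C ⊗ 𝟙_ C)
  /-- `(D_{X,Y} ⊗ id_Z) D_{X⊗Y,Z} = (id_X ⊗ D_{Y,Z}) D_{X,Y⊗Z}` -/
  fus : ∀ X Y Z : C, (D (X ⊗ Y) Z).hom ≫ ((D X Y).hom ⊗ₘ 𝟙 Z)
    = cE (by simp [hS.assocObj]) ((D X (Y ⊗ Z)).hom ≫ (𝟙 X ⊗ₘ (D Y Z).hom))
  /-- the entwining axiom -/
  ent : ∀ X Y Z T : C,
    cE (by simp [hS.assocObj]) (𝟙 X ⊗ₘ (D Y (Z ⊗ T)).hom) ≫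
      cE (by simp [hS.assocObj]) (𝟙 X ⊗ₘ ((D Y Z).inv ⊗ₘ 𝟙 T)) ≫
        ((D (X ⊗ Y) Z).hom ⊗ₘ 𝟙 T)
    = ((D (X ⊗ Y) Z).hom ⊗ₘ 𝟙 T) ≫
        cE (by simp [hS.assocObj]) (𝟙 X ⊗ₘ ((D Y Z).inv ⊗ₘ 𝟙 T)) ≫
          cE (by simp [hS.assocObj]) (𝟙 X ⊗ₘ (D Y (Z ⊗ T)).hom)

/-- A strong twine on a strict monoidal category. -/
structure StrongTwine (C : Type u) [Category.{v} C] [MonoidalCategory C]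
    (hS : MonStrict C) where
  D : ∀ X Y : C, X ⊗ Y ≅ X ⊗ Y
  nat : ∀ {X Y X' Y' : C} (f : X ⟶ X') (g : Y ⟶ Y'),
    (f ⊗ₘ g) ≫ (D X' Y').hom = (D X Y).hom ≫ (f ⊗ₘ g)
  unit : (D (𝟙_ C) (𝟙_ C)).hom = 𝟙 (𝟙_ C ⊗ 𝟙_ C)
  /-- `(T_{U,V} ⊗ id_W) T_{U⊗V,W} = (id_U ⊗ T_{V,W}) T_{U,V⊗W}` -/
  fus : ∀ X Y Z : C, (D (X ⊗ Y) Z).hom ≫ ((D X Y).hom ⊗ₘ 𝟙 Z)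
    = cE (by simp [hS.assocObj]) ((D X (Y ⊗ Z)).hom ≫ (𝟙 X ⊗ₘ (D Y Z).hom))
  /-- `(T_{U,V} ⊗ id_W)(id_U ⊗ T_{V,W}) = (id_U ⊗ T_{V,W})(T_{U,V} ⊗ id_W)` -/
  comm : ∀ X Y Z : C,
    cE (by simp [hS.assocObj]) (𝟙 X ⊗ₘ (D Y Z).hom) ≫ ((D X Y).hom ⊗ₘ 𝟙 Z)
    = ((D X Y).hom ⊗ₘ 𝟙 Z) ≫ cE (by simp [hS.assocObj]) (𝟙 X ⊗ₘ (D Y Z).hom)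

/-- A D-structure (consisting of isomorphisms) on a strict monoidal category. -/
structure DStructure (C : Type u) [Category.{v} C] [MonoidalCategory C]
    (hS : MonStrict C) where
  R : ∀ X : C, X ≅ X
  nat : ∀ {X Y : C} (f : X ⟶ Y), f ≫ (R Y).hom = (R X).hom ≫ f
  unit : (R (𝟙_ C)).hom = 𝟙 (𝟙_ C)
  /-- `(R_{X⊗Y} ⊗ id_Z)(id_X ⊗ R_{Y⊗Z}) = (id_X ⊗ R_{Y⊗Z})(R_{X⊗Y} ⊗ id_Z)` -/
  comm : ∀ X Y Z : C,
    cE (by simp [hS.assocObj]) (𝟙 X ⊗ₘ (R (Y ⊗ Z)).hom) ≫ ((R (X ⊗ Y)).hom ⊗ₘ 𝟙 Z)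
    = ((R (X ⊗ Y)).hom ⊗ₘ 𝟙 Z) ≫ cE (by simp [hS.assocObj]) (𝟙 X ⊗ₘ (R (Y ⊗ Z)).hom)


section StrongTwineIsTwine

set_option linter.unusedSectionVars false

lemma cE_comp {X Y : C} (h : X = Y) (f g : Y ⟶ Y) :
    cE h f ≫ cE h g = cE h (f ≫ g) := by subst h; simp [cE]

lemma cE_id' {X Y : C} (h : X = Y) : cE h (𝟙 Y) = 𝟙 X := by subst h; simp [cE]

lemma cE_cE {X Y Z : C} (h : X = Y) (h' : Y = Z) (f : Z ⟶ Z) :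
    cE h (cE h' f) = cE (h.trans h') f := by subst h; subst h'; simp [cE]

lemma cE_tensor_id {A B T₀ : C} (h : A = B) (h' : A ⊗ T₀ = B ⊗ T₀) (f : B ⟶ B) :
    cE h f ⊗ₘ 𝟙 T₀ = cE h' (f ⊗ₘ 𝟙 T₀) := by subst h; simp [cE]

lemma cE_id_tensor {A B T₀ : C} (h : A = B) (h' : T₀ ⊗ A = T₀ ⊗ B) (f : B ⟶ B) :
    𝟙 T₀ ⊗ₘ cE h f = cE h' (𝟙 T₀ ⊗ₘ f) := by subst h; simp [cE]

lemma assoc_cE (hS : MonStrict C) {X₁ Y₁ Z₁ : C} (f : X₁ ⟶ X₁) (g : Y₁ ⟶ Y₁) (h : Z₁ ⟶ Z₁) :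
    (f ⊗ₘ g) ⊗ₘ h = cE (hS.assocObj X₁ Y₁ Z₁) (f ⊗ₘ (g ⊗ₘ h)) := by
  have h1 := associator_naturality f g h
  rw [hS.assocHom] at h1
  unfold cE
  rw [← Category.assoc, ← h1, Category.assoc, eqToHom_trans, eqToHom_refl, Category.comp_id]

lemma comm_inv {M : C} {x xi y : M ⟶ M} (hx : x ≫ xi = 𝟙 M) (hx' : xi ≫ x = 𝟙 M)
    (h : x ≫ y = y ≫ x) : xi ≫ y = y ≫ xi := by
  have h2 : xi ≫ (y ≫ x) ≫ xi = xi ≫ y := by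
    simp only [Category.assoc, hx, Category.comp_id]
  have h1 : xi ≫ (x ≫ y) ≫ xi = y ≫ xi := by
    simp only [← Category.assoc, hx', Category.id_comp]
  rw [← h2, ← h, h1]

lemma chase {M : C} {a b c p q r s ai bi ci : M ⟶ M}
    (ha : a ≫ ai = 𝟙 M) (ha' : ai ≫ a = 𝟙 M)
    (hb : b ≫ bi = 𝟙 M) (hb' : bi ≫ b = 𝟙 M)
    (hc : c ≫ ci = 𝟙 M) (hc' : ci ≫ c = 𝟙 M)
    (R1 : r ≫ a = p ≫ b) (R2 : s ≫ b = q ≫ c) (R3 : b ≫ c = c ≫ b)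
    (R4 : c ≫ r = r ≫ c) (R5 : s ≫ p = p ≫ s) (R6 : q ≫ a = a ≫ q)
    (R7 : p ≫ b = b ≫ p) (R8 : s ≫ b = b ≫ s) (R9 : a ≫ c = c ≫ a)
    (R10 : a ≫ b = b ≫ a) :
    q ≫ bi ≫ r = r ≫ bi ≫ q := by
  have hbi_p : bi ≫ p = p ≫ bi := comm_inv hb hb' R7.symm
  have hci_b : ci ≫ b = b ≫ ci := comm_inv hc hc' R3.symm
  have hci_r : ci ≫ r = r ≫ ci := comm_inv hc hc' R4
  have hbi_c : bi ≫ c = c ≫ bi := comm_inv hb hb' R3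
  have hai_q : ai ≫ q = q ≫ ai := comm_inv ha ha' R6.symm
  have hai_c : ai ≫ c = c ≫ ai := comm_inv ha ha' R9
  have hai_b : ai ≫ b = b ≫ ai := comm_inv ha ha' R10
  have hqb : q ≫ b = b ≫ q := by
    have hq : q = s ≫ b ≫ ci := by
      rw [← Category.assoc, R2, Category.assoc, hc, Category.comp_id]
    rw [hq]
    simp only [Category.assoc]
    rw [hci_b, ← reassoc_of% R8]
  have hbi_q : bi ≫ q = q ≫ bi := comm_inv hb hb' hqb.symm
  have hr : r = p ≫ b ≫ ai := by
    rw [← Category.assoc, ← R1, Category.assoc, ha, Category.comp_id]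
  have hs : s = q ≫ c ≫ bi := by
    rw [← Category.assoc, ← R2, Category.assoc, hb, Category.comp_id]
  have hqcp : q ≫ c ≫ p = p ≫ q ≫ c := by
    rw [← reassoc_of% R2, R7.symm, reassoc_of% R5, R2]
  have K : s ≫ r = r ≫ s := by
    have h1 : s ≫ r = p ≫ q ≫ c ≫ ai := by
      rw [hs, hr]
      simp only [Category.assoc]
      rw [reassoc_of% hbi_p, reassoc_of% hb', reassoc_of% hqcp]
    have h2 : r ≫ s = p ≫ q ≫ c ≫ ai := by
      rw [hr, hs]
      simp only [Category.assoc]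
      rw [reassoc_of% hai_q, reassoc_of% hai_c, ← reassoc_of% hqb,
        reassoc_of% R3, ← reassoc_of% hai_b, hb, Category.comp_id]
    rw [h1, h2]
  have hqbi : q ≫ bi = s ≫ ci := by
    rw [hs]
    simp only [Category.assoc]
    rw [← reassoc_of% hbi_c, hc, Category.comp_id]
  calc q ≫ bi ≫ r = (q ≫ bi) ≫ r := by rw [Category.assoc]
    _ = s ≫ ci ≫ r := by rw [hqbi, Category.assoc]
    _ = (s ≫ r) ≫ ci := by rw [hci_r, ← Category.assoc]
    _ = r ≫ s ≫ ci := by rw [K, Category.assoc]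
    _ = r ≫ q ≫ bi := by rw [← hqbi]
    _ = r ≫ bi ≫ q := by rw [← hbi_q]

end StrongTwineIsTwine

set_option maxHeartbeats 2000000 in
/-- Every strong twine is a twine: a strongly entwined category is entwined. -/
theorem stmt14 (hS : MonStrict C) (T : StrongTwine C hS) :
    ∃ Tw : Twine C hS, Tw.D = T.D := by
  refine ⟨⟨T.D, T.nat, T.unit, T.fus, ?_⟩, rfl⟩
  intro X Y Z W
  have e1 : ((X ⊗ Y) ⊗ Z) ⊗ W = (X ⊗ (Y ⊗ Z)) ⊗ W := by rw [hS.assocObj X Y Z]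
  have e2 : ((X ⊗ Y) ⊗ Z) ⊗ W = (X ⊗ Y) ⊗ (Z ⊗ W) := hS.assocObj (X ⊗ Y) Z W
  have e3 : ((X ⊗ Y) ⊗ Z) ⊗ W = X ⊗ ((Y ⊗ Z) ⊗ W) := e1.trans (hS.assocObj X (Y ⊗ Z) W)
  have e4 : ((X ⊗ Y) ⊗ Z) ⊗ W = X ⊗ (Y ⊗ (Z ⊗ W)) := e2.trans (hS.assocObj X Y (Z ⊗ W))
  have e34 : X ⊗ ((Y ⊗ Z) ⊗ W) = X ⊗ (Y ⊗ (Z ⊗ W)) := by rw [hS.assocObj Y Z W]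
  -- bridging lemmas between different bracketings of the generators
  have hbb : cE e1 ((𝟙 X ⊗ₘ (T.D Y Z).hom) ⊗ₘ 𝟙 W) = (cE e3 (𝟙 X ⊗ₘ ((T.D Y Z).hom ⊗ₘ 𝟙 W))) := by
    rw [assoc_cE hS (𝟙 X) (T.D Y Z).hom (𝟙 W), cE_cE]
  have haa : cE e2 ((T.D X Y).hom ⊗ₘ 𝟙 (Z ⊗ W)) = (((T.D X Y).hom ⊗ₘ 𝟙 Z) ⊗ₘ 𝟙 W) := by
    rw [assoc_cE hS (T.D X Y).hom (𝟙 Z) (𝟙 W), id_tensorHom_id]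
  have hcc : cE e4 (𝟙 X ⊗ₘ (𝟙 Y ⊗ₘ (T.D Z W).hom)) = (cE e2 (𝟙 (X ⊗ Y) ⊗ₘ (T.D Z W).hom)) := by
    conv_rhs => rw [← id_tensorHom_id X Y, assoc_cE hS (𝟙 X) (𝟙 Y) (T.D Z W).hom, cE_cE]
  -- invertibility
  have ha : (((T.D X Y).hom ⊗ₘ 𝟙 Z) ⊗ₘ 𝟙 W) ≫ (((T.D X Y).inv ⊗ₘ 𝟙 Z) ⊗ₘ 𝟙 W) = 𝟙 _ := by rw [tensorHom_comp_tensorHom, tensorHom_comp_tensorHom]; simp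
  have ha' : (((T.D X Y).inv ⊗ₘ 𝟙 Z) ⊗ₘ 𝟙 W) ≫ (((T.D X Y).hom ⊗ₘ 𝟙 Z) ⊗ₘ 𝟙 W) = 𝟙 _ := by rw [tensorHom_comp_tensorHom, tensorHom_comp_tensorHom]; simp
  have hb : (cE e3 (𝟙 X ⊗ₘ ((T.D Y Z).hom ⊗ₘ 𝟙 W))) ≫ (cE e3 (𝟙 X ⊗ₘ ((T.D Y Z).inv ⊗ₘ 𝟙 W))) = 𝟙 _ := by
    rw [cE_comp]
    have : (𝟙 X ⊗ₘ ((T.D Y Z).hom ⊗ₘ 𝟙 W)) ≫ (𝟙 X ⊗ₘ ((T.D Y Z).inv ⊗ₘ 𝟙 W)) = 𝟙 _ := by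
      rw [tensorHom_comp_tensorHom, tensorHom_comp_tensorHom]; simp
    rw [this, cE_id']
  have hb' : (cE e3 (𝟙 X ⊗ₘ ((T.D Y Z).inv ⊗ₘ 𝟙 W))) ≫ (cE e3 (𝟙 X ⊗ₘ ((T.D Y Z).hom ⊗ₘ 𝟙 W))) = 𝟙 _ := by
    rw [cE_comp]
    have : (𝟙 X ⊗ₘ ((T.D Y Z).inv ⊗ₘ 𝟙 W)) ≫ (𝟙 X ⊗ₘ ((T.D Y Z).hom ⊗ₘ 𝟙 W)) = 𝟙 _ := by
      rw [tensorHom_comp_tensorHom, tensorHom_comp_tensorHom]; simp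
    rw [this, cE_id']
  have hc : (cE e2 (𝟙 (X ⊗ Y) ⊗ₘ (T.D Z W).hom)) ≫ (cE e2 (𝟙 (X ⊗ Y) ⊗ₘ (T.D Z W).inv)) = 𝟙 _ := by
    rw [cE_comp]
    have : (𝟙 (X ⊗ Y) ⊗ₘ (T.D Z W).hom) ≫ (𝟙 (X ⊗ Y) ⊗ₘ (T.D Z W).inv) = 𝟙 _ := by
      rw [tensorHom_comp_tensorHom]; simp
    rw [this, cE_id']
  have hc' : (cE e2 (𝟙 (X ⊗ Y) ⊗ₘ (T.D Z W).inv)) ≫ (cE e2 (𝟙 (X ⊗ Y) ⊗ₘ (T.D Z W).hom)) = 𝟙 _ := by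
    rw [cE_comp]
    have : (𝟙 (X ⊗ Y) ⊗ₘ (T.D Z W).inv) ≫ (𝟙 (X ⊗ Y) ⊗ₘ (T.D Z W).hom) = 𝟙 _ := by
      rw [tensorHom_comp_tensorHom]; simp
    rw [this, cE_id']
  -- the ten relations
  have R1 : ((T.D (X ⊗ Y) Z).hom ⊗ₘ 𝟙 W) ≫ (((T.D X Y).hom ⊗ₘ 𝟙 Z) ⊗ₘ 𝟙 W) = (cE e1 ((T.D X (Y ⊗ Z)).hom ⊗ₘ 𝟙 W)) ≫ (cE e3 (𝟙 X ⊗ₘ ((T.D Y Z).hom ⊗ₘ 𝟙 W))) := by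
    have h1 := congrArg (· ⊗ₘ 𝟙 W) (T.fus X Y Z)
    rw [comp_tensor_id, cE_tensor_id _ e1, comp_tensor_id, ← cE_comp, hbb] at h1
    exact h1
  have R2 : (cE e3 (𝟙 X ⊗ₘ (T.D (Y ⊗ Z) W).hom)) ≫ (cE e3 (𝟙 X ⊗ₘ ((T.D Y Z).hom ⊗ₘ 𝟙 W))) = (cE e4 (𝟙 X ⊗ₘ (T.D Y (Z ⊗ W)).hom)) ≫ (cE e2 (𝟙 (X ⊗ Y) ⊗ₘ (T.D Z W).hom)) := by
    have h1 := congrArg (fun f => cE e3 (𝟙 X ⊗ₘ f)) (T.fus Y Z W)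
    rw [id_tensor_comp, ← cE_comp, cE_id_tensor _ e34, cE_cE,
      id_tensor_comp, ← cE_comp] at h1
    have h2 : (cE e3 (𝟙 X ⊗ₘ (T.D (Y ⊗ Z) W).hom)) ≫ (cE e3 (𝟙 X ⊗ₘ ((T.D Y Z).hom ⊗ₘ 𝟙 W))) = (cE e4 (𝟙 X ⊗ₘ (T.D Y (Z ⊗ W)).hom)) ≫ cE e4 (𝟙 X ⊗ₘ (𝟙 Y ⊗ₘ (T.D Z W).hom)) := h1
    rw [hcc] at h2
    exact h2
  have R3 : (cE e3 (𝟙 X ⊗ₘ ((T.D Y Z).hom ⊗ₘ 𝟙 W))) ≫ (cE e2 (𝟙 (X ⊗ Y) ⊗ₘ (T.D Z W).hom)) = (cE e2 (𝟙 (X ⊗ Y) ⊗ₘ (T.D Z W).hom)) ≫ (cE e3 (𝟙 X ⊗ₘ ((T.D Y Z).hom ⊗ₘ 𝟙 W))) := by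
    have h1 := congrArg (fun f => cE e3 (𝟙 X ⊗ₘ f)) (T.comm Y Z W)
    rw [id_tensor_comp, id_tensor_comp, ← cE_comp, ← cE_comp,
      cE_id_tensor _ e34, cE_cE] at h1
    have h2 : cE e4 (𝟙 X ⊗ₘ (𝟙 Y ⊗ₘ (T.D Z W).hom)) ≫ (cE e3 (𝟙 X ⊗ₘ ((T.D Y Z).hom ⊗ₘ 𝟙 W)))
        = (cE e3 (𝟙 X ⊗ₘ ((T.D Y Z).hom ⊗ₘ 𝟙 W))) ≫ cE e4 (𝟙 X ⊗ₘ (𝟙 Y ⊗ₘ (T.D Z W).hom)) := h1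
    rw [hcc] at h2
    exact h2.symm
  have R4 : (cE e2 (𝟙 (X ⊗ Y) ⊗ₘ (T.D Z W).hom)) ≫ ((T.D (X ⊗ Y) Z).hom ⊗ₘ 𝟙 W) = ((T.D (X ⊗ Y) Z).hom ⊗ₘ 𝟙 W) ≫ (cE e2 (𝟙 (X ⊗ Y) ⊗ₘ (T.D Z W).hom)) := T.comm (X ⊗ Y) Z W
  have R5 : (cE e3 (𝟙 X ⊗ₘ (T.D (Y ⊗ Z) W).hom)) ≫ (cE e1 ((T.D X (Y ⊗ Z)).hom ⊗ₘ 𝟙 W)) = (cE e1 ((T.D X (Y ⊗ Z)).hom ⊗ₘ 𝟙 W)) ≫ (cE e3 (𝟙 X ⊗ₘ (T.D (Y ⊗ Z) W).hom)) := by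
    have h1 := congrArg (cE e1) (T.comm X (Y ⊗ Z) W)
    simp only [← cE_comp, cE_cE] at h1
    exact h1
  have R6 : (cE e4 (𝟙 X ⊗ₘ (T.D Y (Z ⊗ W)).hom)) ≫ (((T.D X Y).hom ⊗ₘ 𝟙 Z) ⊗ₘ 𝟙 W) = (((T.D X Y).hom ⊗ₘ 𝟙 Z) ⊗ₘ 𝟙 W) ≫ (cE e4 (𝟙 X ⊗ₘ (T.D Y (Z ⊗ W)).hom)) := by
    have h1 := congrArg (cE e2) (T.comm X Y (Z ⊗ W))
    simp only [← cE_comp, cE_cE] at h1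
    have h2 : (cE e4 (𝟙 X ⊗ₘ (T.D Y (Z ⊗ W)).hom)) ≫ cE e2 ((T.D X Y).hom ⊗ₘ 𝟙 (Z ⊗ W))
        = cE e2 ((T.D X Y).hom ⊗ₘ 𝟙 (Z ⊗ W)) ≫ (cE e4 (𝟙 X ⊗ₘ (T.D Y (Z ⊗ W)).hom)) := h1
    rw [haa] at h2
    exact h2
  have R7 : (cE e1 ((T.D X (Y ⊗ Z)).hom ⊗ₘ 𝟙 W)) ≫ (cE e3 (𝟙 X ⊗ₘ ((T.D Y Z).hom ⊗ₘ 𝟙 W))) = (cE e3 (𝟙 X ⊗ₘ ((T.D Y Z).hom ⊗ₘ 𝟙 W))) ≫ (cE e1 ((T.D X (Y ⊗ Z)).hom ⊗ₘ 𝟙 W)) := by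
    have h1 := congrArg (fun f => cE e1 (f ⊗ₘ 𝟙 W)) (T.nat (𝟙 X) (T.D Y Z).hom)
    rw [comp_tensor_id, comp_tensor_id, ← cE_comp, ← cE_comp, hbb] at h1
    exact h1.symm
  have R8 : (cE e3 (𝟙 X ⊗ₘ (T.D (Y ⊗ Z) W).hom)) ≫ (cE e3 (𝟙 X ⊗ₘ ((T.D Y Z).hom ⊗ₘ 𝟙 W))) = (cE e3 (𝟙 X ⊗ₘ ((T.D Y Z).hom ⊗ₘ 𝟙 W))) ≫ (cE e3 (𝟙 X ⊗ₘ (T.D (Y ⊗ Z) W).hom)) := by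
    have h1 := congrArg (fun f => cE e3 (𝟙 X ⊗ₘ f)) (T.nat (T.D Y Z).hom (𝟙 W))
    rw [id_tensor_comp, id_tensor_comp, ← cE_comp, ← cE_comp] at h1
    exact h1.symm
  have R9 : (((T.D X Y).hom ⊗ₘ 𝟙 Z) ⊗ₘ 𝟙 W) ≫ (cE e2 (𝟙 (X ⊗ Y) ⊗ₘ (T.D Z W).hom)) = (cE e2 (𝟙 (X ⊗ Y) ⊗ₘ (T.D Z W).hom)) ≫ (((T.D X Y).hom ⊗ₘ 𝟙 Z) ⊗ₘ 𝟙 W) := by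
    have hx : ((T.D X Y).hom ⊗ₘ 𝟙 (Z ⊗ W)) ≫ (𝟙 (X ⊗ Y) ⊗ₘ (T.D Z W).hom)
        = (𝟙 (X ⊗ Y) ⊗ₘ (T.D Z W).hom) ≫ ((T.D X Y).hom ⊗ₘ 𝟙 (Z ⊗ W)) := by
      rw [tensorHom_comp_tensorHom, tensorHom_comp_tensorHom]
      simp
    rw [← haa, cE_comp, cE_comp, hx]
  have R10 : (((T.D X Y).hom ⊗ₘ 𝟙 Z) ⊗ₘ 𝟙 W) ≫ (cE e3 (𝟙 X ⊗ₘ ((T.D Y Z).hom ⊗ₘ 𝟙 W))) = (cE e3 (𝟙 X ⊗ₘ ((T.D Y Z).hom ⊗ₘ 𝟙 W))) ≫ (((T.D X Y).hom ⊗ₘ 𝟙 Z) ⊗ₘ 𝟙 W) := by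
    have h1 := congrArg (· ⊗ₘ 𝟙 W) (T.comm X Y Z)
    rw [comp_tensor_id, comp_tensor_id, cE_tensor_id _ e1, hbb] at h1
    exact h1.symm
  exact chase ha ha' hb hb' hc hc' R1 R2 R3 R4 R5 R6 R7 R8 R9 R10
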